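/- Let f₁,…,fₙ : ℝ^d → ℝ be positive-definite quadratics with a shared Hessian, i.e. fᵢ(x) = ½‖A(x − zᵢ)‖² for a full-rank matrix A ∈ ℝ^{d×d} and points zᵢ ∈ ℝ^d. Then the Pareto set of (f₁,…,fₙ) equals the convex hull of {z₁,…,zₙ}. -/

import Mathlib

open Finset Set RealInnerProductSpace

/-- `x` is Pareto optimal for the objectives `f`: no `y` weakly improves all
objectives and strictly improves one. -/
def ParetoOptimal {α : Type*} {n : ℕ} (f : Fin n → α → ℝ) (x : α) : Prop :=
  ¬ ∃ y, (∀ i, f i y ≤ f i x) ∧ (∃ i, f i y < f i x)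

/-- Core lemma in Euclidean space: the Pareto set of `½‖y - w i‖²` is the convex hull of `w`. -/
lemma pareto_core {d n : ℕ} (hn : 0 < n) (w : Fin n → EuclideanSpace ℝ (Fin d))
    (x : EuclideanSpace ℝ (Fin d)) :
    ParetoOptimal (fun i y => (1 / 2) * ‖y - w i‖ ^ 2) x ↔ x ∈ convexHull ℝ (Set.range w) := by
  constructor
  · -- Pareto optimal → in convex hull; contrapositive via projection
    intro hx
    by_contra hmem
    apply hx
    set K := convexHull ℝ (Set.range w) with hK
    have hKconv : Convex ℝ K := convex_convexHull ℝ _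
    have hKne : K.Nonempty := ⟨w ⟨0, hn⟩, subset_convexHull ℝ _ ⟨⟨0, hn⟩, rfl⟩⟩
    have hKcl : IsClosed K := ((Set.finite_range w).isCompact_convexHull (𝕜 := ℝ)).isClosed
    obtain ⟨v, hvK, hv⟩ := exists_norm_eq_iInf_of_complete_convex hKne hKcl.isComplete hKconv x
    have hproj : ∀ u ∈ K, ⟪x - v, u - v⟫ ≤ 0 :=
      (norm_eq_iInf_iff_real_inner_le_zero hKconv hvK).mp hv
    have hxv : x ≠ v := fun h => hmem (h ▸ hvK)
    have hnorm : 0 < ‖x - v‖ ^ 2 :=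
      pow_pos (norm_pos_iff.mpr (sub_ne_zero.mpr hxv)) 2
    have hlt : ∀ i, ‖v - w i‖ ^ 2 < ‖x - w i‖ ^ 2 := by
      intro i
      have hwK : w i ∈ K := subset_convexHull ℝ _ ⟨i, rfl⟩
      have h1 : ‖x - w i‖ ^ 2 = ‖x - v‖ ^ 2 + 2 * ⟪x - v, v - w i⟫ + ‖v - w i‖ ^ 2 := by
        rw [show x - w i = (x - v) + (v - w i) by abel, norm_add_sq_real]
      have h2 : ⟪x - v, v - w i⟫ = - ⟪x - v, w i - v⟫ := by
        rw [← inner_neg_right]; congr 1; abel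
      have h3 := hproj (w i) hwK
      nlinarith
    exact ⟨v, fun i => by have := hlt i; dsimp only; linarith,
      ⟨⟨0, hn⟩, by have := hlt ⟨0, hn⟩; dsimp only; linarith⟩⟩
  · -- in convex hull → Pareto optimal
    intro hx
    rw [convexHull_range_eq_exists_affineCombination] at hx
    obtain ⟨s, β, hβ0, hβ1, hβx⟩ := hx
    rw [Finset.affineCombination_eq_linear_combination s w β hβ1] at hβx
    rintro ⟨y, hy, i₀, hi₀⟩
    have hle : ∀ i, ‖y - w i‖ ^ 2 ≤ ‖x - w i‖ ^ 2 := fun i => by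
      have := hy i; dsimp only at this; linarith
    have h1 : ∑ i ∈ s, β i * ‖y - w i‖ ^ 2 ≤ ∑ i ∈ s, β i * ‖x - w i‖ ^ 2 :=
      Finset.sum_le_sum fun i hi => mul_le_mul_of_nonneg_left (hle i) (hβ0 i hi)
    have hcross : ∑ i ∈ s, β i * ⟪y - x, x - w i⟫ = 0 := by
      have e1 : ∑ i ∈ s, β i * ⟪y - x, x - w i⟫
          = ⟪y - x, ∑ i ∈ s, β i • (x - w i)⟫ := by
        rw [inner_sum]
        exact Finset.sum_congr rfl fun i _ => (real_inner_smul_right _ _ _).symm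
      have e2 : ∑ i ∈ s, β i • (x - w i) = (0 : EuclideanSpace ℝ (Fin d)) := by
        simp only [smul_sub]
        rw [Finset.sum_sub_distrib, ← Finset.sum_smul, hβ1, one_smul, hβx, sub_self]
      rw [e1, e2, inner_zero_right]
    have h2 : ∑ i ∈ s, β i * ‖y - w i‖ ^ 2
        = ‖y - x‖ ^ 2 + ∑ i ∈ s, β i * ‖x - w i‖ ^ 2 := by
      have hid : ∀ i, ‖y - w i‖ ^ 2
          = ‖y - x‖ ^ 2 + 2 * ⟪y - x, x - w i⟫ + ‖x - w i‖ ^ 2 := fun i => by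
        rw [show y - w i = (y - x) + (x - w i) by abel, norm_add_sq_real]
      calc ∑ i ∈ s, β i * ‖y - w i‖ ^ 2
          = ∑ i ∈ s, (β i * ‖y - x‖ ^ 2 + 2 * (β i * ⟪y - x, x - w i⟫)
              + β i * ‖x - w i‖ ^ 2) := by
            refine Finset.sum_congr rfl fun i _ => ?_; rw [hid i]; ring
        _ = (∑ i ∈ s, β i) * ‖y - x‖ ^ 2 + 2 * ∑ i ∈ s, β i * ⟪y - x, x - w i⟫
              + ∑ i ∈ s, β i * ‖x - w i‖ ^ 2 := by
            rw [Finset.sum_add_distrib, Finset.sum_add_distrib, ← Finset.sum_mul,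
              ← Finset.mul_sum]
        _ = ‖y - x‖ ^ 2 + ∑ i ∈ s, β i * ‖x - w i‖ ^ 2 := by rw [hβ1, hcross]; ring
    have hyx : y = x := by
      have hle0 : ‖y - x‖ ^ 2 ≤ 0 := by linarith
      have : ‖y - x‖ ^ 2 = 0 := le_antisymm hle0 (by positivity)
      have : y - x = 0 := by
        rwa [pow_eq_zero_iff (two_ne_zero), norm_eq_zero] at this
      exact sub_eq_zero.mp this
    subst hyx
    exact lt_irrefl _ hi₀

/-- For positive-definite quadratics with a shared Hessian,
`fᵢ(x) = ½‖A(x − zᵢ)‖²` with `A` full rank, the Pareto set is the convex hull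
of the centers `z₁, …, zₙ`. -/
theorem pareto_set_eq_convexHull {d n : ℕ} (hn : 0 < n)
    (A : Matrix (Fin d) (Fin d) ℝ) (hA : A.det ≠ 0)
    (z : Fin n → (Fin d → ℝ))
    (f : Fin n → (Fin d → ℝ) → ℝ)
    (hf : ∀ i x, f i x = (1 / 2) * ∑ j, (A.mulVec (x - z i) j) ^ 2) :
    {x | ParetoOptimal f x} = convexHull ℝ (Set.range z) := by
  have hAinv : Invertible A := A.invertibleOfIsUnitDet (isUnit_iff_ne_zero.mpr hA)
  let T : (Fin d → ℝ) ≃ₗ[ℝ] EuclideanSpace ℝ (Fin d) :=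
    (A.toLinearEquiv' hAinv).trans (EuclideanSpace.equiv (Fin d) ℝ).symm.toLinearEquiv
  have hT : ∀ v : Fin d → ℝ, ∀ j, (T v : EuclideanSpace ℝ (Fin d)) j = A.mulVec v j := by
    intro v j
    rfl
  have hfT : ∀ i x, f i x = (1 / 2) * ‖T x - T (z i)‖ ^ 2 := by
    intro i x
    rw [hf, ← map_sub]
    congr 1
    rw [EuclideanSpace.norm_eq, Real.sq_sqrt (by positivity)]
    refine (Finset.sum_congr rfl fun j _ => ?_).symm
    rw [Real.norm_eq_abs, sq_abs, hT]
  ext x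
  simp only [Set.mem_setOf_eq]
  have hpar : ParetoOptimal f x ↔
      ParetoOptimal (fun i y => (1 / 2) * ‖y - T (z i)‖ ^ 2) (T x) := by
    unfold ParetoOptimal
    constructor
    · intro h ⟨y, hy1, hy2⟩
      exact h ⟨T.symm y, fun i => by
          have := hy1 i; rw [hfT, hfT, T.apply_symm_apply]; exact this,
        hy2.imp fun i hi => by rw [hfT, hfT, T.apply_symm_apply]; exact hi⟩
    · intro h ⟨y, hy1, hy2⟩
      exact h ⟨T y, fun i => by have := hy1 i; rwa [hfT, hfT] at this,
        hy2.imp fun i hi => by rwa [hfT, hfT] at hi⟩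
  rw [hpar, pareto_core hn (fun i => T (z i)) (T x)]
  have himg : Set.range (fun i => T (z i)) = T '' Set.range z := by
    rw [← Set.range_comp]; rfl
  rw [himg, show (⇑T : (Fin d → ℝ) → EuclideanSpace ℝ (Fin d)) = ⇑T.toLinearMap from rfl,
    ← T.toLinearMap.image_convexHull]
  simp only [LinearEquiv.coe_coe]
  exact T.injective.mem_set_image
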